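/- Let x be a homogeneous state (each block is all-A or all-B). If X and Y are enhancements of x with X ∼_A Y and X ∼_B Y, then X = Y; i.e., [X]_A ∩ [X]_B = {X}. -/

import Mathlib

/-- Swap the labels on the two endpoint circles of a crossing arc. -/
def swapAt {n : ℕ} (e : Fin n × Fin n) (a : Fin n → Bool) : Fin n → Bool :=
  Function.update (Function.update a e.1 (a e.2)) e.2 (a e.1)

/-- The equivalence relation `∼_A` (for `v = true`) resp. `∼_B` (for `v = false`) on
enhancements of a state, generated by swapping the labels on the two endpoint circles of
an arc of the corresponding type (`sm t = true` means an A-arc at crossing `t`, and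
`ep t` gives the two circles the arc joins). -/
def RelLab {c n : ℕ} (sm : Fin c → Bool) (ep : Fin c → Fin n × Fin n) (v : Bool) :
    (Fin n → Bool) → (Fin n → Bool) → Prop :=
  Relation.ReflTransGen fun a b => ∃ t, sm t = v ∧ b = swapAt (ep t) a

/-- Connectivity of circles through arcs of a fixed type: `Conn sm ep true i j` says the
circles `i`, `j` lie in the same A-zone (`v = false`: same B-zone). -/
def Conn {c n : ℕ} (sm : Fin c → Bool) (ep : Fin c → Fin n × Fin n) (v : Bool) :
    Fin n → Fin n → Prop :=
  Relation.ReflTransGen fun i j => ∃ t, sm t = v ∧ (ep t = (i, j) ∨ ep t = (j, i))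

/-- Homogeneity of a state: no simple cycle of the state graph contains arcs of both
types (equivalently, every block of the state graph is all-A or all-B). -/
def Homog {c n : ℕ} (sm : Fin c → Bool) (ep : Fin c → Fin n × Fin n) : Prop :=
  ∀ (k : ℕ), 2 ≤ k → ∀ (te : ZMod k → Fin c) (ve : ZMod k → Fin n),
    Function.Injective te → Function.Injective ve →
    (∀ i, ep (te i) = (ve i, ve (i + 1)) ∨ ep (te i) = (ve (i + 1), ve i)) →
    ∀ i j, sm (te i) = sm (te j)

namespace HomogAux

open Relation

variable {c n : ℕ}

lemma rtg_symm {α : Type*} {r : α → α → Prop} (h : Symmetric r) : Symmetric (ReflTransGen r) := by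
  intro a b hab
  induction hab with
  | refl => exact ReflTransGen.refl
  | tail _ hbc ih => exact ReflTransGen.head (h hbc) ih

lemma cstep_symm (sm : Fin c → Bool) (ep : Fin c → Fin n × Fin n) (v : Bool) :
    Symmetric (fun i j => ∃ t, sm t = v ∧ (ep t = (i, j) ∨ ep t = (j, i))) := by
  rintro i j ⟨t, ht, h⟩; exact ⟨t, ht, h.symm⟩

lemma conn_symm (sm : Fin c → Bool) (ep : Fin c → Fin n × Fin n) (v : Bool) :
    Symmetric (Conn sm ep v) :=
  rtg_symm (cstep_symm sm ep v)

lemma swapAt_eq (e : Fin n × Fin n) (a : Fin n → Bool) :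
    swapAt e a = fun j => a (Equiv.swap e.1 e.2 j) := by
  funext j
  rcases e with ⟨p, q⟩
  simp only [swapAt, Function.update]
  by_cases hq : j = q
  · subst hq; simp [Equiv.swap_apply_right]
  · by_cases hp : j = p
    · subst hp; simp [hq, Equiv.swap_apply_left]
    · simp [hq, hp, Equiv.swap_apply_of_ne_of_ne hp hq]

open Classical in
/-- The sum of labels over a zone is invariant under `RelLab`. -/
lemma sum_invariant (sm : Fin c → Bool) (ep : Fin c → Fin n × Fin n) (v : Bool)
    (X Y : Fin n → Bool) (h : RelLab sm ep v X Y) (i : Fin n) :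
    ∑ j ∈ Finset.univ.filter (fun j => Conn sm ep v i j), (if X j then (1:ℤ) else 0)
      = ∑ j ∈ Finset.univ.filter (fun j => Conn sm ep v i j), (if Y j then (1:ℤ) else 0) := by
  induction h with
  | refl => rfl
  | tail hxy hstep ih =>
    rename_i Z W
    obtain ⟨t, ht, rfl⟩ := hstep
    rw [ih]
    set p := (ep t).1 with hp
    set q := (ep t).2 with hq
    have hepq : ep t = (p, q) := rfl
    set S := Finset.univ.filter (fun j => Conn sm ep v i j) with hS
    have hstab : ∀ j ∈ S, Equiv.swap p q j ∈ S := by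
      intro j hj
      rw [hS, Finset.mem_filter] at hj ⊢
      refine ⟨Finset.mem_univ _, ?_⟩
      rcases hj with ⟨-, hj⟩
      by_cases h1 : j = p
      · subst h1
        rw [Equiv.swap_apply_left]
        exact hj.tail ⟨t, ht, Or.inl hepq⟩
      · by_cases h2 : j = q
        · subst h2
          rw [Equiv.swap_apply_right]
          exact hj.tail ⟨t, ht, Or.inr hepq⟩
        · rw [Equiv.swap_apply_of_ne_of_ne h1 h2]; exact hj
    rw [swapAt_eq]
    refine Finset.sum_nbij' (fun j => Equiv.swap p q j) (fun j => Equiv.swap p q j)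
      (fun j hj => hstab j hj) (fun j hj => hstab j hj) ?_ ?_ ?_
    · intro j _; simp
    · intro j _; simp
    · intro j hj; rw [← hp, ← hq]; simp

lemma self_ne_add_one {k : ℕ} (hk : 2 ≤ k) (i : ZMod k) : i ≠ i + 1 := by
  intro h
  have h1 : (1 : ZMod k) = 0 := by
    have := congrArg (· - i) h
    simpa [add_sub_cancel_left] using this.symm
  haveI : NeZero k := ⟨by omega⟩
  have := ZMod.val_one_eq_one_mod k
  rw [h1] at this
  simp [ZMod.val_zero, Nat.mod_eq_of_lt (by omega : 1 < k)] at this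

/-- making an arc a self-loop preserves homogeneity -/
lemma homog_update (sm : Fin c → Bool) (ep : Fin c → Fin n × Fin n)
    (t0 : Fin c) (p : Fin n) (h : Homog sm ep) :
    Homog sm (Function.update ep t0 (p, p)) := by
  intro k hk te ve hte hve hj
  apply h k hk te ve hte hve
  intro i
  have hne : te i ≠ t0 := by
    intro he
    have hcon : ve i = ve (i + 1) := by
      rcases hj i with h1 | h1 <;>
      · rw [he, Function.update_self] at h1
        simp only [Prod.ext_iff] at h1
        rw [← h1.1, ← h1.2]
    exact absurd (hve hcon) (self_ne_add_one hk i)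
  have := hj i
  rwa [Function.update_of_ne hne] at this

/-- arcs of the other type are untouched -/
lemma conn_update_other (sm : Fin c → Bool) (ep : Fin c → Fin n × Fin n)
    (t0 : Fin c) (e' : Fin n × Fin n) (b : Bool) (hb : b ≠ sm t0) :
    Conn sm (Function.update ep t0 e') b = Conn sm ep b := by
  have gen : ∀ (f g : Fin c → Fin n × Fin n),
      (∀ t, sm t = b → f t = g t) →
      ∀ i j, (∃ t, sm t = b ∧ (f t = (i,j) ∨ f t = (j,i))) →
        (∃ t, sm t = b ∧ (g t = (i,j) ∨ g t = (j,i))) := by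
    rintro f g hfg i j ⟨t, ht, h⟩
    exact ⟨t, ht, by rw [← hfg t ht]; exact h⟩
  have h1 : ∀ t, sm t = b → Function.update ep t0 e' t = ep t := by
    intro t ht
    have : t ≠ t0 := by rintro rfl; exact hb ht.symm
    rw [Function.update_of_ne this]
  ext i j
  constructor
  · exact ReflTransGen.mono (fun x y h => gen _ ep h1 x y h) i j
  · exact ReflTransGen.mono (fun x y h => gen ep _ (fun t ht => (h1 t ht).symm) x y h) i j

/-- looping an arc only shrinks connectivity -/
lemma conn_update_le (sm : Fin c → Bool) (ep : Fin c → Fin n × Fin n)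
    (t0 : Fin c) (p : Fin n) (v : Bool) (i j : Fin n)
    (h : Conn sm (Function.update ep t0 (p, p)) v i j) : Conn sm ep v i j := by
  induction h with
  | refl => exact ReflTransGen.refl
  | @tail x y _ hstep ih =>
    obtain ⟨t, ht, hor⟩ := hstep
    by_cases he : t = t0
    · subst he
      rw [Function.update_self] at hor
      have hxy : x = y := by
        rcases hor with h | h <;> (simp only [Prod.ext_iff] at h; rw [← h.1, ← h.2])
      rwa [← hxy]
    · rw [Function.update_of_ne he] at hor
      exact ih.tail ⟨t, ht, hor⟩

/-- removing a redundant arc preserves connectivity -/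
lemma conn_update_redundant (sm : Fin c → Bool) (ep : Fin c → Fin n × Fin n)
    (t0 : Fin c) (p q : Fin n) (hep : ep t0 = (p, q))
    (halt : Relation.ReflTransGen
      (fun i j => ∃ t, t ≠ t0 ∧ sm t = sm t0 ∧ (ep t = (i, j) ∨ ep t = (j, i))) p q)
    (v : Bool) (i j : Fin n) :
    Conn sm (Function.update ep t0 (p, p)) v i j ↔ Conn sm ep v i j := by
  constructor
  · exact conn_update_le sm ep t0 p v i j
  · intro h
    by_cases hv : v = sm t0
    · subst hv
      have hav : ∀ x y, (∃ t, t ≠ t0 ∧ sm t = sm t0 ∧ (ep t = (x, y) ∨ ep t = (y, x))) →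
          (∃ t, sm t = sm t0 ∧ (Function.update ep t0 (p,p) t = (x, y) ∨
            Function.update ep t0 (p,p) t = (y, x))) := by
        rintro x y ⟨t, hne, ht, hor⟩
        exact ⟨t, ht, by rw [Function.update_of_ne hne]; exact hor⟩
      have hpq : Conn sm (Function.update ep t0 (p, p)) (sm t0) p q :=
        ReflTransGen.mono hav _ _ halt
      have hqp : Conn sm (Function.update ep t0 (p, p)) (sm t0) q p := by
        have hsymalt := rtg_symm
          (r := fun i j => ∃ t, t ≠ t0 ∧ sm t = sm t0 ∧ (ep t = (i, j) ∨ ep t = (j, i)))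
          (by rintro x y ⟨t, h1, h2, h3⟩; exact ⟨t, h1, h2, h3.symm⟩) halt
        exact ReflTransGen.mono hav _ _ hsymalt
      induction h with
      | refl => exact ReflTransGen.refl
      | @tail x y _ hstep ih =>
        obtain ⟨t, ht, hor⟩ := hstep
        by_cases he : t = t0
        · subst he
          rw [hep] at hor
          rcases hor with h1 | h1 <;> simp only [Prod.ext_iff] at h1
          · obtain ⟨rfl, rfl⟩ := h1; exact ih.trans hpq
          · obtain ⟨rfl, rfl⟩ := h1; exact ih.trans hqp
        · exact ih.tail ⟨t, ht, by rw [Function.update_of_ne he]; exact hor⟩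
    · rw [conn_update_other sm ep t0 (p,p) v (by simpa using hv)]
      exact h

/-- leaf condition: every arc other than `t0` touching `q` is a loop -/
def Leaf (ep : Fin c → Fin n × Fin n) (t0 : Fin c) (q : Fin n) : Prop :=
  ∀ t, t ≠ t0 → ((ep t).1 = q ∨ (ep t).2 = q) → (ep t).1 = (ep t).2

lemma leaf_step (ep : Fin c → Fin n × Fin n) (t0 : Fin c) (q : Fin n)
    (hleaf : Leaf ep t0 q) {t : Fin c} {y : Fin n} (hne : t ≠ t0)
    (hor : ep t = (q, y) ∨ ep t = (y, q)) : y = q := by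
  rcases hor with h1 | h1
  · have := hleaf t hne (Or.inl (by rw [h1])); rw [h1] at this; exact this.symm
  · have := hleaf t hne (Or.inr (by rw [h1])); rw [h1] at this; exact this

/-- arcs of the other type cannot leave q -/
lemma conn_leaf_other (sm : Fin c → Bool) (ep : Fin c → Fin n × Fin n)
    (t0 : Fin c) (q : Fin n) (hleaf : Leaf ep t0 q) (b : Bool) (hb : b ≠ sm t0)
    (j : Fin n) (h : Conn sm ep b q j) : j = q := by
  induction h with
  | refl => rfl
  | @tail x y _ hstep ih =>
    obtain ⟨t, ht, hor⟩ := hstep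
    have hne : t ≠ t0 := by rintro rfl; exact hb ht.symm
    rw [ih] at hor
    exact leaf_step ep t0 q hleaf hne hor

/-- after looping t0, q is isolated for type (sm t0) -/
lemma conn_leaf_isolated (sm : Fin c → Bool) (ep : Fin c → Fin n × Fin n)
    (t0 : Fin c) (p q : Fin n) (hleaf : Leaf ep t0 q)
    (hpq : p ≠ q) (j : Fin n)
    (h : Conn sm (Function.update ep t0 (p, p)) (sm t0) q j) : j = q := by
  induction h with
  | refl => rfl
  | @tail x y _ hstep ih =>
    obtain ⟨t, ht, hor⟩ := hstep
    rw [ih] at hor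
    by_cases he : t = t0
    · subst he
      rw [Function.update_self] at hor
      exfalso
      rcases hor with h1 | h1 <;> simp only [Prod.ext_iff] at h1
      · exact hpq h1.1
      · exact hpq h1.2
    · rw [Function.update_of_ne he] at hor
      exact leaf_step ep t0 q hleaf he hor

/-- key dichotomy lemma when removing a leaf arc -/
lemma conn_leaf_key (sm : Fin c → Bool) (ep : Fin c → Fin n × Fin n)
    (t0 : Fin c) (p q : Fin n) (hleaf : Leaf ep t0 q)
    (hep : ep t0 = (p, q) ∨ ep t0 = (q, p)) (hpq : p ≠ q) (i j : Fin n)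
    (hiq : i ≠ q) (h : Conn sm ep (sm t0) i j) :
    (j = q ∧ Conn sm (Function.update ep t0 (p, p)) (sm t0) i p) ∨
    (j ≠ q ∧ Conn sm (Function.update ep t0 (p, p)) (sm t0) i j) := by
  induction h with
  | refl => exact Or.inr ⟨hiq, ReflTransGen.refl⟩
  | @tail x y _ hstep ih =>
    obtain ⟨t, ht, hor⟩ := hstep
    rcases ih with ⟨hxq, ihc⟩ | ⟨hxq, ihc⟩
    · rw [hxq] at hor
      by_cases he : t = t0
      · subst he
        have hyp : y = p := by
          rcases hep with h2 | h2 <;> rw [h2] at hor <;>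
            rcases hor with h1 | h1 <;> simp only [Prod.ext_iff] at h1
          · exact absurd h1.1 hpq
          · exact h1.1.symm
          · exact h1.2.symm
          · exact absurd h1.2 hpq
        subst hyp
        exact Or.inr ⟨hpq, ihc⟩
      · have := leaf_step ep t0 q hleaf he hor
        exact Or.inl ⟨this, ihc⟩
    · by_cases he : t = t0
      · subst he
        have hxy : x = p ∧ y = q := by
          rcases hep with h2 | h2 <;> rw [h2] at hor <;>
            rcases hor with h1 | h1 <;> simp only [Prod.ext_iff] at h1
          · exact ⟨h1.1.symm, h1.2.symm⟩
          · exact absurd h1.2.symm hxq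
          · exact absurd h1.1.symm hxq
          · exact ⟨h1.2.symm, h1.1.symm⟩
        obtain ⟨rfl, rfl⟩ := hxy
        exact Or.inl ⟨rfl, ihc⟩
      · by_cases hyq : y = q
        · exfalso
          rw [hyq] at hor
          have : x = q := leaf_step ep t0 q hleaf he (by
            rcases hor with h1 | h1
            · exact Or.inr h1
            · exact Or.inl h1)
          exact hxq this
        · refine Or.inr ⟨hyq, ihc.tail ⟨t, ht, ?_⟩⟩
          rw [Function.update_of_ne he]; exact hor

lemma exists_cycle (ep : Fin c → Fin n × Fin n)
    (hex : ∃ t, (ep t).1 ≠ (ep t).2)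
    (hdeg : ∀ u t, (ep t).1 ≠ (ep t).2 → ((ep t).1 = u ∨ (ep t).2 = u) →
      ∃ t', t' ≠ t ∧ (ep t').1 ≠ (ep t').2 ∧ ((ep t').1 = u ∨ (ep t').2 = u)) :
    ∃ (k : ℕ), 2 ≤ k ∧ ∃ (te : ZMod k → Fin c) (ve : ZMod k → Fin n),
      Function.Injective te ∧ Function.Injective ve ∧
      (∀ i, ep (te i) = (ve i, ve (i + 1)) ∨ ep (te i) = (ve (i + 1), ve i)) := by
  classical
  set P : ℕ → Prop := fun m => ∃ (v : Fin (m+1) → Fin n) (t : Fin m → Fin c),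
    Function.Injective v ∧ ∀ i : Fin m,
      ep (t i) = (v i.castSucc, v i.succ) ∨ ep (t i) = (v i.succ, v i.castSucc) with hP
  obtain ⟨t1, ht1⟩ := hex
  have hP1 : P 1 := by
    refine ⟨fun i => if i.val = 0 then (ep t1).1 else (ep t1).2, fun _ => t1, ?_, ?_⟩
    · intro a b hab
      have ha := a.isLt; have hb := b.isLt
      by_cases h1 : a.val = 0 <;> by_cases h2 : b.val = 0 <;>
        simp only [h1, h2, if_pos, if_neg, if_true, if_false] at hab
      · exact Fin.ext (by omega)
      · exact absurd hab ht1
      · exact absurd hab.symm ht1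
      · exact Fin.ext (by omega)
    · intro i
      left
      have h1 : (i.castSucc).val = 0 := by simp
      have h2 : (i.succ).val = 1 := by simp
      simp only [h1, h2]
      norm_num [Prod.ext_iff]
  have hbound : ∀ m, P m → m + 1 ≤ n := by
    rintro m ⟨v, t, hv, -⟩
    simpa using Fintype.card_le_of_injective v hv
  have h1n : 1 ≤ n := by have := hbound 1 hP1; omega
  set M := Nat.findGreatest P n with hM
  have hPM : P M := Nat.findGreatest_spec (m := 1) (n := n) (by omega) hP1
  have hM1 : 1 ≤ M := Nat.le_findGreatest (m := 1) (n := n) (by omega) hP1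
  have hMmax : ¬ P (M + 1) := by
    intro hp
    have h2 := hbound _ hp
    have := Nat.le_findGreatest (m := M + 1) (n := n) (by omega) hp
    omega
  obtain ⟨v, t, hv, hedge⟩ := hPM
  have hvval : ∀ a b : Fin (M+1), v a = v b → a.val = b.val := by
    intro a b hab; exact congrArg Fin.val (hv hab)
  have ht_inj : ∀ i i' : Fin M, t i = t i' → i = i' := by
    intro i i' hii
    have e := hedge i
    rw [hii] at e
    rcases e with h1 | h1 <;> rcases hedge i' with h2 | h2 <;> rw [h2] at h1 <;>
      simp only [Prod.ext_iff] at h1 <;>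
    · have e1 := hvval _ _ h1.1
      have e2 := hvval _ _ h1.2
      simp only [Fin.coe_castSucc, Fin.val_succ] at e1 e2
      exact Fin.ext (by omega)
  have hMlt : 0 < M := hM1
  have h0real : (ep (t ⟨0, hMlt⟩)).1 ≠ (ep (t ⟨0, hMlt⟩)).2 := by
    rcases hedge ⟨0, hMlt⟩ with h1 | h1 <;> rw [h1] <;> intro hc <;>
    · have := hvval _ _ hc
      simp only [Fin.coe_castSucc, Fin.val_succ] at this
      omega
  have h0touch : (ep (t ⟨0, hMlt⟩)).1 = v 0 ∨ (ep (t ⟨0, hMlt⟩)).2 = v 0 := by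
    have hcs : (⟨0, hMlt⟩ : Fin M).castSucc = (0 : Fin (M+1)) := Fin.ext (by simp)
    rcases hedge ⟨0, hMlt⟩ with h1 | h1
    · left; rw [h1, hcs]
    · right; rw [h1, hcs]
  obtain ⟨t', ht'ne, ht'real, ht'touch⟩ := hdeg (v 0) (t ⟨0, hMlt⟩) h0real h0touch
  set w : Fin n := if (ep t').1 = v 0 then (ep t').2 else (ep t').1 with hwdef
  have hw : (ep t' = (v 0, w) ∨ ep t' = (w, v 0)) ∧ w ≠ v 0 := by
    by_cases h : (ep t').1 = v 0
    · rw [hwdef]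
      simp only [if_pos h]
      exact ⟨Or.inl (Prod.ext h rfl), fun hc => ht'real (by rw [h, hc])⟩
    · rw [hwdef]
      simp only [if_neg h]
      rcases ht'touch with h2 | h2
      · exact absurd h2 h
      · exact ⟨Or.inr (Prod.ext rfl h2), h⟩
  by_cases hwin : ∃ j : Fin (M+1), v j = w
  · -- w is on the path: extract the cycle
    obtain ⟨j, hj⟩ := hwin
    have hjne : 0 < j.val := by
      rcases Nat.eq_zero_or_pos j.val with h0 | h0
      · exfalso; apply hw.2; rw [← hj]; congr 1; exact Fin.ext (by simpa using h0)
      · exact h0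
    have hjvM : j.val ≤ M := by have := j.isLt; omega
    set k := j.val + 1 with hkdef
    haveI : NeZero k := ⟨by omega⟩
    haveI : Fact (1 < k) := ⟨by omega⟩
    have hvallt : ∀ x : ZMod k, x.val < M + 1 := by
      intro x; have := ZMod.val_lt x; omega
    have ht'path : ∀ m : Fin M, t m = t' → False := by
      intro m hm
      have e := hedge m
      rw [hm] at e
      have hmz : m.val = 0 → False := by
        intro h0
        apply ht'ne
        rw [← hm]
        congr 1
        exact (Fin.ext h0 : m = ⟨0, hMlt⟩).symm ▸ rfl
      rcases e with h1 | h1 <;> rcases hw.1 with h2 | h2 <;> rw [h2] at h1 <;>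
        simp only [Prod.ext_iff] at h1
      · have e1 := hvval _ _ h1.1
        simp only [Fin.coe_castSucc, Fin.val_zero] at e1
        exact hmz e1.symm
      · have e2 := hvval _ _ h1.2
        simp only [Fin.val_succ, Fin.val_zero] at e2
        omega
      · have e1 := hvval _ _ h1.1
        simp only [Fin.coe_castSucc, Fin.val_succ, Fin.val_zero] at e1
        omega
      · have e2 := hvval _ _ h1.2
        simp only [Fin.coe_castSucc, Fin.val_zero] at e2
        exact hmz e2.symm
    refine ⟨k, by omega,
      (fun x => if hx : x.val < j.val then t ⟨x.val, by omega⟩ else t'),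
      (fun x => v ⟨x.val, hvallt x⟩), ?_, ?_, ?_⟩
    · -- te injective
      intro a b hab
      have ha' := ZMod.val_lt a; have hb' := ZMod.val_lt b
      by_cases ha : a.val < j.val <;> by_cases hb : b.val < j.val <;>
        simp only [dif_pos, dif_neg, ha, hb, dite_true, dite_false] at hab
      · have := congrArg Fin.val (ht_inj _ _ hab)
        simp at this
        exact ZMod.val_injective k (by omega)
      · exact absurd hab (fun h => ht'path _ h)
      · exact absurd hab.symm (fun h => ht'path _ h)
      · exact ZMod.val_injective k (by omega)
    · -- ve injective
      intro a b hab
      have := hvval _ _ hab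
      simp only at this
      exact ZMod.val_injective k this
    · intro x
      by_cases hx : x.val < j.val
      · have hx1 : (x + 1).val = x.val + 1 := by
          rw [ZMod.val_add, ZMod.val_one]
          exact Nat.mod_eq_of_lt (by omega)
        simp only [dif_pos hx]
        rcases hedge ⟨x.val, by omega⟩ with h1 | h1 <;> [left; right] <;> rw [h1] <;>
          refine congrArg₂ Prod.mk (congrArg v (Fin.ext ?_)) (congrArg v (Fin.ext ?_)) <;>
          simp [Fin.coe_castSucc, Fin.val_succ, hx1]
      · have hxv : x.val = j.val := by have := ZMod.val_lt x; omega
        have hx1 : (x + 1).val = 0 := by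
          rw [ZMod.val_add, ZMod.val_one, hxv]
          simp [hkdef]
        simp only [dif_neg hx]
        have hvx : v ⟨x.val, hvallt x⟩ = w := by rw [← hj]; exact congrArg v (Fin.ext hxv)
        have hvx1 : v ⟨(x+1).val, hvallt (x+1)⟩ = v 0 := congrArg v (Fin.ext (by simp [hx1]))
        rcases hw.1 with h2 | h2
        · right; rw [h2, hvx, hvx1]
        · left; rw [h2, hvx, hvx1]
  · -- w is fresh: extend the path, contradicting maximality
    exfalso
    apply hMmax
    push_neg at hwin
    refine ⟨fun i => if h : i.val = 0 then w else v ⟨i.val - 1, by omega⟩,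
      fun i => if h : i.val = 0 then t' else t ⟨i.val - 1, by omega⟩, ?_, ?_⟩
    · intro a b hab
      by_cases ha : a.val = 0 <;> by_cases hb : b.val = 0 <;>
        simp only [dif_pos, dif_neg, ha, hb, dite_true, dite_false] at hab
      · exact Fin.ext (by omega)
      · exact absurd hab.symm (hwin _)
      · exact absurd hab (hwin _)
      · have := hvval _ _ hab
        simp only at this
        exact Fin.ext (by omega)
    · intro i
      by_cases h : i.val = 0
      · have hc : (i.castSucc).val = 0 := by simp [Fin.coe_castSucc, h]
        have hs : (i.succ).val = 1 := by simp [Fin.val_succ, h]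
        simp only [dif_pos h, dif_pos hc, hs]
        rw [dif_neg (by norm_num : ¬(1:ℕ) = 0)]
        have h00 : v ⟨1 - 1, by omega⟩ = v 0 := congrArg v (Fin.ext (by simp))
        rw [h00]
        rcases hw.1 with h1 | h1
        · right; rw [h1]
        · left; rw [h1]
      · have hc : (i.castSucc).val = i.val := by simp [Fin.coe_castSucc]
        have hs : (i.succ).val = i.val + 1 := by simp [Fin.val_succ]
        have hc0 : ¬ (i.castSucc).val = 0 := by omega
        have hs0 : ¬ (i.succ).val = 0 := by omega
        simp only [dif_neg h, dif_neg hc0, dif_neg hs0]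
        rcases hedge ⟨i.val - 1, by omega⟩ with h1 | h1 <;> [left; right] <;> rw [h1] <;>
          refine congrArg₂ Prod.mk (congrArg v (Fin.ext ?_)) (congrArg v (Fin.ext ?_)) <;>
          simp [Fin.coe_castSucc, Fin.val_succ, hc, hs] <;> omega


/-- From a simple cycle and homogeneity, extract a redundant arc. -/
lemma exists_redundant (sm : Fin c → Bool) (ep : Fin c → Fin n × Fin n)
    (hhom : Homog sm ep) {k : ℕ} (hk : 2 ≤ k) (te : ZMod k → Fin c) (ve : ZMod k → Fin n)
    (hte : Function.Injective te) (hve : Function.Injective ve)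
    (hedge : ∀ i, ep (te i) = (ve i, ve (i + 1)) ∨ ep (te i) = (ve (i + 1), ve i)) :
    ∃ (t0 : Fin c) (p q : Fin n), ep t0 = (p, q) ∧ p ≠ q ∧
      Relation.ReflTransGen
        (fun i j => ∃ t, t ≠ t0 ∧ sm t = sm t0 ∧ (ep t = (i, j) ∨ ep t = (j, i))) p q := by
  haveI : NeZero k := ⟨by omega⟩
  haveI : Fact (1 < k) := ⟨by omega⟩
  have hpure : ∀ i, sm (te i) = sm (te 0) := fun i => hhom k hk te ve hte hve hedge i 0
  set t0 := te 0 with ht0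
  set R : Fin n → Fin n → Prop :=
    fun i j => ∃ t, t ≠ t0 ∧ sm t = sm t0 ∧ (ep t = (i, j) ∨ ep t = (j, i)) with hR
  have hRsym : Symmetric R := by rintro x y ⟨t, h1, h2, h3⟩; exact ⟨t, h1, h2, h3.symm⟩
  -- going around the cycle from ve 1 back to ve 0 avoiding te 0
  have hval : ∀ m : ℕ, m < k → ((m : ZMod k)).val = m := fun m hm => ZMod.val_natCast_of_lt hm
  have hchain : ∀ m : ℕ, m ≤ k - 1 → Relation.ReflTransGen R (ve 1) (ve (1 + (m : ℕ))) := by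
    intro m
    induction m with
    | zero => intro _; simpa using ReflTransGen.refl
    | succ m ih =>
      intro hm
      have hle : m ≤ k - 1 := by omega
      refine (ih hle).tail ?_
      rw [hR]
      have hne : (1 + (m : ℕ) : ZMod k) ≠ 0 := by
        intro hc
        have := congrArg ZMod.val hc
        rw [ZMod.val_zero] at this
        have h2 : ((1 + m : ℕ) : ZMod k).val = 1 + m := hval _ (by omega)
        rw [show ((1:ZMod k) + (m:ℕ)) = ((1 + m : ℕ) : ZMod k) by push_cast; ring] at this
        omega
      refine ⟨te (1 + (m : ℕ)), fun hc => hne (hte hc), hpure _, ?_⟩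
      have := hedge (1 + (m : ℕ))
      have harg : (1 + (m : ℕ) : ZMod k) + 1 = (1 + ((m+1 : ℕ) : ZMod k)) := by push_cast; ring
      rw [harg] at this
      rcases this with h1 | h1
      · exact Or.inl h1
      · exact Or.inr h1
  have hfin : Relation.ReflTransGen R (ve 1) (ve 0) := by
    have := hchain (k - 1) le_rfl
    have harg : (1 + ((k - 1 : ℕ) : ZMod k)) = 0 := by
      have : ((1 + (k-1) : ℕ) : ZMod k) = ((k : ℕ) : ZMod k) := by congr 1; omega
      push_cast at this ⊢
      rw [this]
      exact ZMod.natCast_self k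
    rwa [harg] at this
  have h01 : ve 0 ≠ ve 1 := by
    intro hc
    have := hve hc
    have h1 : ((1:ZMod k)).val = 1 := ZMod.val_one k
    have := congrArg ZMod.val this
    rw [ZMod.val_zero, h1] at this
    omega
  rcases hedge 0 with h1 | h1
  · refine ⟨t0, ve 0, ve (0+1), h1, by simpa using h01, ?_⟩
    simpa using rtg_symm hRsym hfin
  · refine ⟨t0, ve (0+1), ve 0, h1, by simpa using h01.symm, ?_⟩
    simpa using hfin



lemma conn_of_loops {c n : ℕ} (sm : Fin c → Bool) (ep : Fin c → Fin n × Fin n)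
    (hloop : ∀ t : Fin c, (ep t).1 = (ep t).2) (v : Bool) (i j : Fin n)
    (h : Conn sm ep v i j) : j = i := by
  induction h with
  | refl => rfl
  | @tail x y _ hstep ih =>
    obtain ⟨t, ht, hor⟩ := hstep
    have hl := hloop t
    rcases hor with h1 | h1 <;> rw [h1] at hl <;> simp only at hl
    · exact hl.symm.trans ih
    · exact hl.trans ih

open Classical in
lemma sum_singleton_zone {c n : ℕ} (sm : Fin c → Bool) (ep : Fin c → Fin n × Fin n)
    (g : Fin n → ℤ) (v : Bool) (i : Fin n)
    (hsingle : ∀ j, Conn sm ep v i j → j = i)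
    (hsum : ∑ j ∈ Finset.univ.filter (fun j => Conn sm ep v i j), g j = 0) :
    g i = 0 := by
  have : Finset.univ.filter (fun j => Conn sm ep v i j) = {i} := by
    ext j
    simp only [Finset.mem_filter, Finset.mem_univ, true_and, Finset.mem_singleton]
    constructor
    · exact hsingle j
    · rintro rfl; exact ReflTransGen.refl
  rw [this, Finset.sum_singleton] at hsum
  exact hsum

end HomogAux

namespace HomogAux
open Relation
open Classical in
/-- Master lemma: for a homogeneous state, a weight function summing to zero on every
zone of each type is identically zero.  Induction on the number of non-loop arcs. -/
lemma master {c n : ℕ} (N : ℕ) :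
    ∀ (sm : Fin c → Bool) (ep : Fin c → Fin n × Fin n) (g : Fin n → ℤ),
    (Finset.univ.filter (fun t => (ep t).1 ≠ (ep t).2)).card ≤ N →
    Homog sm ep →
    (∀ (v : Bool) (i : Fin n),
      ∑ j ∈ Finset.univ.filter (fun j => Conn sm ep v i j), g j = 0) →
    ∀ i, g i = 0 := by
  induction N with
  | zero =>
    intro sm ep g hcard hhom hsum i
    have hloop : ∀ t : Fin c, (ep t).1 = (ep t).2 := by
      intro t
      by_contra hc
      have : t ∈ Finset.univ.filter (fun t => (ep t).1 ≠ (ep t).2) := by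
        simp [hc]
      have := Finset.card_pos.mpr ⟨t, this⟩
      omega
    exact sum_singleton_zone sm ep g true i
      (fun j hj => conn_of_loops sm ep hloop true i j hj) (hsum true i)
  | succ N ih =>
    intro sm ep g hcard hhom hsum i
    by_cases hreal : ∃ t, (ep t).1 ≠ (ep t).2
    case neg =>
      push_neg at hreal
      exact sum_singleton_zone sm ep g true i
        (fun j hj => conn_of_loops sm ep hreal true i j hj) (hsum true i)
    case pos =>
    -- generic facts about looping a real arc t0 with endpoints p ≠ q
    have hcard' : ∀ (t0 : Fin c) (p : Fin n), (ep t0).1 ≠ (ep t0).2 →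
        (Finset.univ.filter
          (fun t => ((Function.update ep t0 (p, p)) t).1 ≠ ((Function.update ep t0 (p, p)) t).2)).card ≤ N := by
      intro t0 p ht0
      have hss : Finset.univ.filter
            (fun t => ((Function.update ep t0 (p, p)) t).1 ≠ ((Function.update ep t0 (p, p)) t).2) ⊂
          Finset.univ.filter (fun t => (ep t).1 ≠ (ep t).2) := by
        constructor
        · intro t htm
          simp only [Finset.mem_filter, Finset.mem_univ, true_and] at htm ⊢
          by_cases he : t = t0
          · subst he; rw [Function.update_self] at htm; simp at htm
          · rwa [Function.update_of_ne he] at htm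
        · intro hsub
          have ht0m : t0 ∈ Finset.univ.filter (fun t => (ep t).1 ≠ (ep t).2) := by
            simp [ht0]
          have := hsub ht0m
          simp only [Finset.mem_filter, Finset.mem_univ, true_and,
            Function.update_self] at this
          exact this rfl
      have := Finset.card_lt_card hss
      omega
    by_cases hleafE : ∃ (t0 : Fin c) (q : Fin n), (ep t0).1 ≠ (ep t0).2 ∧
        ((ep t0).1 = q ∨ (ep t0).2 = q) ∧ Leaf ep t0 q
    · -- leaf case
      obtain ⟨t0, q, ht0real, ht0touch, hleaf⟩ := hleafE
      -- p := the other endpoint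
      obtain ⟨p, hpq, hepor⟩ : ∃ p : Fin n, p ≠ q ∧ (ep t0 = (p, q) ∨ ep t0 = (q, p)) := by
        rcases ht0touch with h1 | h1
        · exact ⟨(ep t0).2, by rw [← h1]; exact fun hc => ht0real hc.symm,
            Or.inr (by rw [← h1])⟩
        · exact ⟨(ep t0).1, by rw [← h1]; exact ht0real,
            Or.inl (by rw [← h1])⟩
      set ep' := Function.update ep t0 (p, p) with hep'
      have hgq : g q = 0 := by
        refine sum_singleton_zone sm ep g (!(sm t0)) q ?_ (hsum _ q)
        intro j hj
        exact conn_leaf_other sm ep t0 q hleaf _ (by simp) j hj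
      refine ih sm ep' g (hcard' t0 p ht0real) (homog_update sm ep t0 p hhom) ?_ i
      intro v j
      by_cases hv : v = sm t0
      · subst hv
        by_cases hjq : j = q
        · rw [hjq]
          have hfq : Finset.univ.filter (fun j' => Conn sm ep' (sm t0) q j') = {q} := by
            ext j'
            simp only [Finset.mem_filter, Finset.mem_univ, true_and, Finset.mem_singleton]
            constructor
            · exact conn_leaf_isolated sm ep t0 p q hleaf hpq j'
            · rintro rfl; exact ReflTransGen.refl
          rw [hfq, Finset.sum_singleton]
          exact hgq
        · have hfil : Finset.univ.filter (fun j' => Conn sm ep' (sm t0) j j')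
              = (Finset.univ.filter (fun j' => Conn sm ep (sm t0) j j')).erase q := by
            ext j'
            simp only [Finset.mem_filter, Finset.mem_univ, true_and, Finset.mem_erase]
            constructor
            · intro hc
              refine ⟨?_, conn_update_le sm ep t0 p _ j j' hc⟩
              intro hq
              rw [hq] at hc
              exact hjq (conn_leaf_isolated sm ep t0 p q hleaf hpq j
                (conn_symm sm ep' (sm t0) hc))
            · rintro ⟨hne, hc⟩
              rcases conn_leaf_key sm ep t0 p q hleaf hepor hpq j j' hjq hc with
                ⟨h1, -⟩ | ⟨-, h2⟩
              · exact absurd h1 hne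
              · exact h2
          rw [hfil, Finset.sum_erase _ hgq]
          exact hsum _ j
      · have : Conn sm ep' v = Conn sm ep v := conn_update_other sm ep t0 (p, p) v hv
        rw [this]
        exact hsum v j
    · -- no leaf: min degree ≥ 2, extract a cycle and then a redundant arc
      have hdeg : ∀ u t, (ep t).1 ≠ (ep t).2 → ((ep t).1 = u ∨ (ep t).2 = u) →
          ∃ t', t' ≠ t ∧ (ep t').1 ≠ (ep t').2 ∧ ((ep t').1 = u ∨ (ep t').2 = u) := by
        intro u t htreal httouch
        by_contra hc
        push_neg at hc
        apply hleafE
        refine ⟨t, u, htreal, httouch, ?_⟩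
        intro t' hne htouch'
        by_contra hloopy
        rcases htouch' with h | h
        · exact (hc t' hne hloopy).1 h
        · exact (hc t' hne hloopy).2 h
      obtain ⟨k, hk2, te, ve, hte, hve, hedge⟩ := exists_cycle ep hreal hdeg
      obtain ⟨t0, p, q, hept0, hpq, halt⟩ :=
        exists_redundant sm ep hhom hk2 te ve hte hve hedge
      set ep' := Function.update ep t0 (p, p) with hep'
      have ht0real : (ep t0).1 ≠ (ep t0).2 := by rw [hept0]; exact hpq
      refine ih sm ep' g (hcard' t0 p ht0real) (homog_update sm ep t0 p hhom) ?_ i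
      intro v j
      have : Finset.univ.filter (fun j' => Conn sm ep' v j j')
          = Finset.univ.filter (fun j' => Conn sm ep v j j') := by
        ext j'
        simp only [Finset.mem_filter, Finset.mem_univ, true_and]
        exact conn_update_redundant sm ep t0 p q hept0 halt v j j'
      rw [this]
      exact hsum v j

end HomogAux

open HomogAux in
open Classical in
/-- For a homogeneous state `x`, the `A`- and `B`-equivalence classes of an enhancement
`X` intersect only in `X`: if `X ∼_A Y` and `X ∼_B Y` then `X = Y`. -/
theorem homogeneous_classes_intersect_trivially (c n : ℕ) (sm : Fin c → Bool)
    (ep : Fin c → Fin n × Fin n) (hhom : Homog sm ep) (X Y : Fin n → Bool)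
    (hA : RelLab sm ep true X Y) (hB : RelLab sm ep false X Y) : X = Y := by
  set g : Fin n → ℤ := fun j => (if X j then (1:ℤ) else 0) - (if Y j then (1:ℤ) else 0)
    with hg
  have hsum : ∀ (v : Bool) (i : Fin n),
      ∑ j ∈ Finset.univ.filter (fun j => Conn sm ep v i j), g j = 0 := by
    intro v i
    rw [hg]
    rw [Finset.sum_sub_distrib]
    cases v
    · rw [sum_invariant sm ep false X Y hB i]; ring
    · rw [sum_invariant sm ep true X Y hA i]; ring
  have hzero := master (Finset.univ.filter (fun t => (ep t).1 ≠ (ep t).2)).card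
    sm ep g le_rfl hhom hsum
  funext j
  have := hzero j
  rw [hg] at this
  simp only at this
  cases hX : X j <;> cases hY : Y j <;> rw [hX, hY] at this <;> simp at this <;> rfl
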